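/- For every nonnegative integer n, the sum over all pairs of nonnegative integers (i, j) with i + j = n of B_{2i} · B_{2j}, minus the sum over all pairs of nonnegative integers (i, j) with i + j = n and j ≥ 1 of B_{2i+1} · B_{2j−1}, equals 4^n · B_n. -/

import Mathlib

open Finset

noncomputable def Bq (m : ℕ) : ℚ := (Nat.centralBinom m : ℚ)

lemma Bq_rec (m : ℕ) : ((m:ℚ)+1) * Bq (m+1) = 2*(2*m+1) * Bq m := by
  have h := congrArg (Nat.cast : ℕ → ℚ) (Nat.succ_mul_centralBinom_succ m)
  push_cast at h
  unfold Bq; linarith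

lemma Bq_succ (m : ℕ) : Bq (m+1) = 2*(2*m+1) * Bq m / ((m:ℚ)+1) := by
  have := Bq_rec m
  have hm1 : ((m:ℚ)+1) ≠ 0 := by positivity
  field_simp
  linarith

noncomputable def hfun (a t : ℕ) : ℚ :=
  (-1)^a * a * Bq a * Bq (t+1) / (2*(2*t+1))

lemma key (n k m : ℕ) (h : k + m = 2*n) :
    ((n:ℚ)+1) * ((-1)^k * Bq k * Bq (m+2)) - 8*(2*(n:ℚ)+1) * ((-1)^k * Bq k * Bq m)
      = hfun (k+1) m - hfun k (m+1) := by
  have hn : (n:ℚ) = ((k:ℚ) + m)/2 := by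
    have : ((k:ℚ) + m) = 2*n := by exact_mod_cast congrArg (Nat.cast : ℕ → ℚ) h
    linarith
  unfold hfun
  rw [show m+1+1 = (m+1)+1 from rfl, Bq_succ (m+1), Bq_succ m, Bq_succ k, hn]
  have h1 : (2*(m:ℚ)+1) ≠ 0 := by positivity
  have h2 : (2*((m:ℚ)+1)+1) ≠ 0 := by positivity
  have hk1 : ((k:ℚ)+1) ≠ 0 := by positivity
  have hm1 : ((m:ℚ)+1) ≠ 0 := by positivity
  have hm22 : ((m:ℚ)+1+1) ≠ 0 := by positivity
  push_cast
  field_simp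
  ring

noncomputable def S (n : ℕ) : ℚ :=
  ∑ k ∈ Finset.range (2*n+1), (-1)^k * Bq k * Bq (2*n - k)

lemma hfun_zero (t : ℕ) : hfun 0 t = 0 := by simp [hfun]

lemma Srec (n : ℕ) : ((n:ℚ)+1) * S (n+1) = 8*(2*(n:ℚ)+1) * S n := by
  have expand : S (n+1)
      = (∑ k ∈ Finset.range (2*n+1), (-1)^k * Bq k * Bq ((2*n - k)+2))
        + (-1)^(2*n+1) * Bq (2*n+1) * Bq 1 + (-1)^(2*n+2) * Bq (2*n+2) * Bq 0 := by
    have h2 : 2*(n+1)+1 = (2*n+1)+1+1 := by ring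
    unfold S
    rw [h2, Finset.sum_range_succ, Finset.sum_range_succ]
    congr 1
    · congr 1
      · apply Finset.sum_congr rfl
        intro k hk
        have hk' : k ≤ 2*n := by simpa [Nat.lt_succ_iff] using hk
        congr 2
        omega
      · congr 2
        omega
    · congr 2
      omega
  have tele : ∑ k ∈ Finset.range (2*n+1),
      (((n:ℚ)+1) * ((-1)^k * Bq k * Bq ((2*n - k)+2))
        - 8*(2*(n:ℚ)+1) * ((-1)^k * Bq k * Bq (2*n - k)))
      = hfun (2*n+1) 0 - hfun 0 (2*n+1) := by
    have step : ∀ k ∈ Finset.range (2*n+1),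
        (((n:ℚ)+1) * ((-1)^k * Bq k * Bq ((2*n - k)+2))
          - 8*(2*(n:ℚ)+1) * ((-1)^k * Bq k * Bq (2*n - k)))
        = (fun k => hfun k (2*n+1 - k)) (k+1) - (fun k => hfun k (2*n+1 - k)) k := by
      intro k hk
      have hk' : k ≤ 2*n := by simpa [Nat.lt_succ_iff] using hk
      have h1 : 2*n+1-(k+1) = 2*n-k := by omega
      have h2 : 2*n+1-k = (2*n-k)+1 := by omega
      simp only [h1, h2]
      exact key n k (2*n-k) (by omega)
    rw [Finset.sum_congr rfl step, Finset.sum_range_sub (fun k => hfun k (2*n+1 - k))]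
    simp
  have boundary : ((n:ℚ)+1) * ((-1)^(2*n+1) * Bq (2*n+1) * Bq 1 + (-1)^(2*n+2) * Bq (2*n+2) * Bq 0)
      = -(hfun (2*n+1) 0 - hfun 0 (2*n+1)) := by
    have hB1 : Bq 1 = 2 := by unfold Bq; norm_num [Nat.centralBinom]
    have hB0 : Bq 0 = 1 := by unfold Bq; norm_num [Nat.centralBinom]
    have hrec := Bq_rec (2*n+1)
    rw [hfun_zero, hfun]
    push_cast at hrec ⊢
    rw [hB1, hB0]
    have : (-1:ℚ)^(2*n+1) = -1 := by
      rw [pow_succ, pow_mul]; norm_num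
    rw [show 2*n+1+1 = 2*(n+1) from by ring] at *
    rw [this, show (-1:ℚ)^(2*(n+1)) = 1 from by rw [pow_mul]; norm_num]
    field_simp
    nlinarith [hrec]
  rw [expand]
  unfold S
  rw [mul_add, mul_add, mul_comm (8*(2*(n:ℚ)+1)), Finset.sum_mul, Finset.mul_sum]
  have := tele
  rw [Finset.sum_sub_distrib] at this
  have h8 : ∑ k ∈ Finset.range (2*n+1), ((-1)^k * Bq k * Bq (2*n-k)) * (8*(2*(n:ℚ)+1))
      = ∑ k ∈ Finset.range (2*n+1), 8*(2*(n:ℚ)+1) * ((-1)^k * Bq k * Bq (2*n-k)) := by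
    apply Finset.sum_congr rfl; intro k _; ring
  linarith [boundary, this, h8.ge, h8.le]

lemma S_eq (n : ℕ) : S n = 4^n * Bq n := by
  induction n with
  | zero => simp [S, Bq, Nat.centralBinom]
  | succ n ih =>
    have hrec := Srec n
    have hB := Bq_rec n
    have hn1 : ((n:ℚ)+1) ≠ 0 := by positivity
    rw [ih] at hrec
    have : ((n:ℚ)+1) * S (n+1) = ((n:ℚ)+1) * (4^(n+1) * Bq (n+1)) := by
      rw [hrec]; linear_combination (-(4:ℚ)^(n+1)) * hB
    exact mul_left_cancel₀ hn1 this

lemma split_even_odd (m : ℕ) (f : ℕ → ℚ) :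
    ∑ k ∈ Finset.range (2*m+1), f k
      = (∑ i ∈ Finset.range (m+1), f (2*i)) + ∑ i ∈ Finset.range m, f (2*i+1) := by
  induction m with
  | zero => simp
  | succ m ih =>
    have h : 2*(m+1)+1 = (2*m+1)+1+1 := by ring
    rw [h, Finset.sum_range_succ, Finset.sum_range_succ, ih,
      Finset.sum_range_succ (fun i => f (2*i)) (m+1),
      Finset.sum_range_succ (fun i => f (2*i+1)) m]
    have e1 : 2*m+1 = 2*m+1 := rfl
    have e2 : 2*m+1+1 = 2*(m+1) := by ring
    rw [e2]
    ring

lemma S_split (n : ℕ) :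
    S n = (∑ i ∈ Finset.range (n+1), Bq (2*i) * Bq (2*n - 2*i))
        - ∑ i ∈ Finset.range n, Bq (2*i+1) * Bq (2*n - (2*i+1)) := by
  unfold S
  rw [split_even_odd n (fun k => (-1)^k * Bq k * Bq (2*n - k))]
  have h1 : ∀ i, (-1:ℚ)^(2*i) = 1 := fun i => by rw [pow_mul]; norm_num
  have h2 : ∀ i, (-1:ℚ)^(2*i+1) = -1 := fun i => by rw [pow_succ, h1]; norm_num
  simp only [h1, h2]
  rw [sub_eq_add_neg, ← Finset.sum_neg_distrib]
  congr 1
  · apply Finset.sum_congr rfl; intro i _; ring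
  · apply Finset.sum_congr rfl; intro i _; ring

lemma A_eq (n : ℕ) :
    ∑ ij ∈ Finset.HasAntidiagonal.antidiagonal n, Bq (2*ij.1) * Bq (2*ij.2)
      = ∑ i ∈ Finset.range (n+1), Bq (2*i) * Bq (2*n - 2*i) := by
  rw [Finset.Nat.sum_antidiagonal_eq_sum_range_succ_mk]
  apply Finset.sum_congr rfl
  intro i hi
  have : i ≤ n := by simpa [Nat.lt_succ_iff] using hi
  congr 2
  omega

lemma B_eq (n : ℕ) :
    ∑ ij ∈ (Finset.HasAntidiagonal.antidiagonal n).filter (fun ij => 1 ≤ ij.2),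
        Bq (2*ij.1+1) * Bq (2*ij.2 - 1)
      = ∑ i ∈ Finset.range n, Bq (2*i+1) * Bq (2*n - (2*i+1)) := by
  rw [Finset.sum_filter, Finset.Nat.sum_antidiagonal_eq_sum_range_succ_mk,
    Finset.sum_range_succ]
  simp only [Nat.sub_self]
  norm_num
  apply Finset.sum_congr rfl
  intro i hi
  have hi' : i < n := Finset.mem_range.mp hi
  rw [if_pos (by omega : 1 ≤ n - i)]
  congr 2
  omega

/-- For every nonnegative integer `n`,
`∑_{i+j=n} B_{2i} B_{2j} − ∑_{i+j=n, j≥1} B_{2i+1} B_{2j−1} = 4^n B_n`. -/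
theorem alternating_centralBinom_convolution (n : ℕ) :
    (∑ ij ∈ Finset.HasAntidiagonal.antidiagonal n,
        (Nat.centralBinom (2 * ij.1) * Nat.centralBinom (2 * ij.2) : ℤ)) -
      ∑ ij ∈ (Finset.HasAntidiagonal.antidiagonal n).filter (fun ij => 1 ≤ ij.2),
        (Nat.centralBinom (2 * ij.1 + 1) * Nat.centralBinom (2 * ij.2 - 1) : ℤ) =
      4 ^ n * Nat.centralBinom n := by
  have hq : (∑ ij ∈ Finset.HasAntidiagonal.antidiagonal n, Bq (2*ij.1) * Bq (2*ij.2))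
      - (∑ ij ∈ (Finset.HasAntidiagonal.antidiagonal n).filter (fun ij => 1 ≤ ij.2),
          Bq (2*ij.1+1) * Bq (2*ij.2 - 1))
      = 4^n * Bq n := by
    rw [A_eq, B_eq, ← S_split, S_eq]
  unfold Bq at hq
  exact_mod_cast hq
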